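/- Let X be an n×p real matrix such that XᵀX is invertible. For every p×n real matrix A satisfying A·X = I_p (the p×p identity matrix), the matrix A·Aᵀ − (XᵀX)⁻¹ is positive semidefinite. (This is the deterministic core of the Gauss–Markov theorem: under homoskedastic errors with covariance σ²I, any linear unbiased estimator Ay of β has covariance σ²AAᵀ, which dominates the OLS covariance σ²(XᵀX)⁻¹ in the positive-semidefinite order, so OLS is the best linear unbiased estimator.) -/
import Mathlib

open Matrix BigOperators

/-- Deterministic core of the Gauss–Markov theorem: if `XᵀX` is invertible and
`A` is any left inverse of `X` (so that `Ay` is a linear unbiased estimator of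
`β`), then `AAᵀ − (XᵀX)⁻¹` is positive semidefinite. -/
theorem gauss_markov_core {n p : ℕ} (X : Matrix (Fin n) (Fin p) ℝ)
    (hX : IsUnit (Xᵀ * X)) (A : Matrix (Fin p) (Fin n) ℝ)
    (hA : A * X = (1 : Matrix (Fin p) (Fin p) ℝ)) :
    (A * Aᵀ - (Xᵀ * X)⁻¹).PosSemidef := by
  have hdet : IsUnit (Xᵀ * X).det := (Matrix.isUnit_iff_isUnit_det _).mp hX
  set B := (Xᵀ * X)⁻¹ with hB
  have hBsymm : Bᵀ = B := by
    rw [hB, Matrix.transpose_nonsing_inv, Matrix.transpose_mul, Matrix.transpose_transpose]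
  have hinv : B * (Xᵀ * X) = 1 := Matrix.nonsing_inv_mul _ hdet
  set D := A - B * Xᵀ with hD
  have key : A * Aᵀ - B = D * Dᵀ := by
    have hDT : Dᵀ = Aᵀ - X * B := by
      rw [hD, Matrix.transpose_sub, Matrix.transpose_mul, Matrix.transpose_transpose, hBsymm]
    rw [hD, hDT]
    have h1 : A * (X * B) = B := by rw [← Matrix.mul_assoc, hA, Matrix.one_mul]
    have h2 : B * Xᵀ * Aᵀ = B := by
      have : Xᵀ * Aᵀ = (1 : Matrix (Fin p) (Fin p) ℝ) := by
        rw [← Matrix.transpose_mul, hA, Matrix.transpose_one]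
      rw [Matrix.mul_assoc, this, Matrix.mul_one]
    have h3 : B * Xᵀ * (X * B) = B := by
      rw [Matrix.mul_assoc, ← Matrix.mul_assoc Xᵀ, ← Matrix.mul_assoc, hinv, Matrix.one_mul]
    rw [Matrix.sub_mul, Matrix.mul_sub, Matrix.mul_sub, h1, h2, h3]
    abel
  rw [key]
  have : Dᵀ = Dᴴ := rfl
  rw [this]
  exact Matrix.posSemidef_self_mul_conjTranspose D
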